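/- A holomorphic function f on the punctured disc D* with finite weighted L² norm ∫_{D*} (-log|z|²)^{k-2} |f(z)|² |z|^{-2} dA(z) < ∞ (for k ≥ 2) extends holomorphically to 0; equivalently, its Laurent expansion at 0 involves only terms z^j with j ≥ 1. -/

import Mathlib

open MeasureTheory Metric Set Complex
open scoped Real

lemma circleMV {f : ℂ → ℂ} {c : ℂ} {r : ℝ} (hr : 0 < r)
    (hd : DifferentiableOn ℂ f (closedBall c r)) :
    2 * π * ‖f c‖ ≤ ∫ θ in (0:ℝ)..(2*π), ‖f (circleMap c r θ)‖ := by
  have h := hd.circleIntegral_sub_inv_smul (mem_ball_self hr)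
  rw [circleIntegral] at h
  have key : ∀ θ : ℝ, deriv (circleMap c r) θ • ((circleMap c r θ - c)⁻¹ • f (circleMap c r θ))
      = I * f (circleMap c r θ) := by
    intro θ
    have hne : circleMap 0 r θ ≠ 0 := circleMap_ne_center hr.ne'
    rw [deriv_circleMap, circleMap_sub_center, smul_eq_mul, smul_eq_mul]
    field_simp
  simp_rw [key] at h
  have h2 : ‖(2 * ↑π * I : ℂ) • f c‖ = 2 * π * ‖f c‖ := by
    rw [norm_smul]
    congr 1
    simp [norm_mul, Complex.norm_I, Complex.norm_real, Real.norm_of_nonneg Real.pi_pos.le]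
  calc 2 * π * ‖f c‖ = ‖∫ θ in (0:ℝ)..(2*π), I * f (circleMap c r θ)‖ := by rw [h, h2]
    _ ≤ ∫ θ in (0:ℝ)..(2*π), ‖I * f (circleMap c r θ)‖ :=
        intervalIntegral.norm_integral_le_integral_norm (by positivity)
    _ = ∫ θ in (0:ℝ)..(2*π), ‖f (circleMap c r θ)‖ := by
        simp [norm_mul]

lemma polar_symm_continuous : Continuous (fun p : ℝ × ℝ => Complex.polarCoord.symm p) := by
  simp only [Complex.polarCoord_symm_apply]
  fun_prop

lemma areaMV {f : ℂ → ℂ} {c : ℂ} {R : ℝ} (hR : 0 < R)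
    (hd : DifferentiableOn ℂ f (closedBall c R)) :
    π * R ^ 2 * ‖f c‖ ^ 2 ≤ ∫ w in ball c R, ‖f w‖ ^ 2 := by
  classical
  set u : ℂ → ℝ := fun w => ‖f w‖ ^ 2 with hu
  have hu_cont : ContinuousOn u (closedBall c R) := (hd.continuousOn.norm).pow 2
  obtain ⟨M, hM⟩ := (isCompact_closedBall c R).exists_bound_of_continuousOn hu_cont
  set v : ℂ → ℝ := fun w => u (c + w) with hv
  have hmaps : ∀ w ∈ closedBall (0:ℂ) R, c + w ∈ closedBall c R := by
    intro w hw
    simpa [mem_closedBall, dist_eq_norm] using hw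
  have hv_cont : ContinuousOn v (closedBall (0:ℂ) R) :=
    hu_cont.comp (by fun_prop) hmaps
  set F : ℂ → ℝ := (ball (0:ℂ) R).indicator v with hF
  have hFmeas : Measurable F := by
    have : F = (ball (0:ℂ) R).piecewise v 0 := by
      rw [Set.piecewise_eq_indicator]
    rw [this]
    exact (hv_cont.mono ball_subset_closedBall).measurable_piecewise
      continuousOn_const measurableSet_ball
  set G : ℝ × ℝ → ℝ := fun p => p.1 * F (Complex.polarCoord.symm p) with hG
  have hGmeas : Measurable G :=
    measurable_fst.mul (hFmeas.comp polar_symm_continuous.measurable)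
  have hv_nonneg : ∀ w, 0 ≤ v w := fun w => by positivity
  have hF_nonneg : ∀ w, 0 ≤ F w := fun w => Set.indicator_nonneg (fun w _ => hv_nonneg w) w
  -- Step A : total integral of F
  have stepA : ∫ p, F p = ∫ w in ball c R, u w := by
    have e1 : ∀ w : ℂ, F w = (ball c R).indicator u (c + w) := by
      intro w
      by_cases hw : w ∈ ball (0:ℂ) R
      · have h2 : c + w ∈ ball c R := by
          simpa [mem_ball, dist_eq_norm] using hw
        rw [hF, Set.indicator_of_mem hw, Set.indicator_of_mem h2]
      · have h2 : c + w ∉ ball c R := by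
          simpa [mem_ball, dist_eq_norm] using hw
        rw [hF, Set.indicator_of_notMem hw, Set.indicator_of_notMem h2]
    calc ∫ p, F p = ∫ w, (ball c R).indicator u (c + w) := by simp_rw [e1]
      _ = ∫ w, (ball c R).indicator u w := integral_add_left_eq_self _ c
      _ = ∫ w in ball c R, u w := integral_indicator measurableSet_ball
  -- Step B : polar coordinates
  have stepB : ∫ p in Set.Ioi (0:ℝ) ×ˢ Set.Ioo (-π) π, G p = ∫ p, F p := by
    have := Complex.integral_comp_polarCoord_symm F
    rw [show polarCoord.target = Set.Ioi (0:ℝ) ×ˢ Set.Ioo (-π) π from rfl] at this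
    simpa [hG, smul_eq_mul] using this
  -- Step C : integrability of G on the polar target
  have habs : ∀ p : ℝ × ℝ, ‖Complex.polarCoord.symm p‖ = |p.1| :=
    Complex.norm_polarCoord_symm
  have hG_int : IntegrableOn G (Set.Ioi (0:ℝ) ×ˢ Set.Ioo (-π) π) := by
    refine Integrable.mono'
      (g := (Set.Ioo (0:ℝ) R ×ˢ Set.Ioo (-π) π).indicator (fun _ => R * (M ⊔ 0)))
      ?_ (hGmeas.aestronglyMeasurable.restrict) ?_
    · rw [integrable_indicator_iff (measurableSet_Ioo.prod measurableSet_Ioo)]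
      refine integrableOn_const (ne_of_lt ?_) enorm_ne_top
      calc ((volume : Measure (ℝ × ℝ)).restrict _) (Set.Ioo 0 R ×ˢ Set.Ioo (-π) π)
          ≤ (volume : Measure (ℝ × ℝ)) (Set.Ioo 0 R ×ˢ Set.Ioo (-π) π) :=
            Measure.restrict_apply_le _ _
        _ < ⊤ := by
            rw [Measure.volume_eq_prod, Measure.prod_prod, Real.volume_Ioo, Real.volume_Ioo]
            exact ENNReal.mul_lt_top ENNReal.ofReal_lt_top ENNReal.ofReal_lt_top
    · refine (ae_restrict_iff' (measurableSet_Ioi.prod measurableSet_Ioo)).2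
        (Filter.Eventually.of_forall ?_)
      rintro ⟨r, θ⟩ hp
      obtain ⟨hr, hθ⟩ := hp
      simp only [Set.mem_Ioi] at hr
      by_cases hrR : r < R
      · have hmem : (r, θ) ∈ Set.Ioo (0:ℝ) R ×ˢ Set.Ioo (-π) π := ⟨⟨hr, hrR⟩, hθ⟩
        rw [Set.indicator_of_mem hmem]
        have hFb : F (Complex.polarCoord.symm (r, θ)) ≤ M ⊔ 0 := by
          by_cases hm : Complex.polarCoord.symm (r, θ) ∈ ball (0:ℂ) R
          · rw [hF, Set.indicator_of_mem hm]
            have : c + Complex.polarCoord.symm (r, θ) ∈ closedBall c R :=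
              hmaps _ (ball_subset_closedBall hm)
            calc v _ = ‖v (Complex.polarCoord.symm (r, θ))‖ :=
                  (Real.norm_of_nonneg (hv_nonneg _)).symm
              _ ≤ M := hM _ this
              _ ≤ M ⊔ 0 := le_max_left _ _
          · rw [hF, Set.indicator_of_notMem hm]
            exact le_max_right _ _
        have : ‖G (r, θ)‖ = r * F (Complex.polarCoord.symm (r, θ)) := by
          rw [hG, Real.norm_of_nonneg (mul_nonneg hr.le (hF_nonneg _))]
        rw [this]
        exact mul_le_mul hrR.le hFb (hF_nonneg _) hR.le
      · have hm : Complex.polarCoord.symm (r, θ) ∉ ball (0:ℂ) R := by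
          intro hmem
          rw [mem_ball, Complex.dist_eq, sub_zero, habs, abs_of_pos hr] at hmem
          exact hrR hmem
        have : G (r, θ) = 0 := by
          show (r, θ).1 * F (Complex.polarCoord.symm (r, θ)) = 0
          rw [hF, Set.indicator_of_notMem hm, mul_zero]
        rw [this, norm_zero]
        exact Set.indicator_nonneg (fun _ _ => by positivity) _
  -- Step D : Fubini
  set inner : ℝ → ℝ := fun r => ∫ θ in Set.Ioo (-π) π, G (r, θ) with hinner_def
  have stepD : ∫ p in Set.Ioi (0:ℝ) ×ˢ Set.Ioo (-π) π, G p = ∫ r in Set.Ioi (0:ℝ), inner r := by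
    rw [Measure.volume_eq_prod] at hG_int ⊢
    exact setIntegral_prod G hG_int
  -- integrability of inner
  have hinner_int : IntegrableOn inner (Set.Ioi (0:ℝ)) := by
    have h1 := hG_int
    rw [Measure.volume_eq_prod, IntegrableOn, ← Measure.prod_restrict] at h1
    exact h1.integral_prod_left
  have hG_nonneg : ∀ p : ℝ × ℝ, 0 < p.1 → 0 ≤ G p := by
    intro p hp
    exact mul_nonneg hp.le (hF_nonneg _)
  have hinner_nonneg : ∀ r ∈ Set.Ioi (0:ℝ), 0 ≤ inner r := by
    intro r hr
    exact integral_nonneg fun θ => hG_nonneg (r, θ) hr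
  -- Step E : lower bound for inner on Ioo 0 R
  have hstepE : ∀ r ∈ Set.Ioo (0:ℝ) R, 2 * π * ‖f c‖ ^ 2 * r ≤ inner r := by
    intro r hr
    have hsymm : ∀ θ : ℝ, c + Complex.polarCoord.symm (r, θ) = circleMap c r θ := by
      intro θ
      rw [Complex.polarCoord_symm_apply, circleMap]
      rw [Complex.exp_mul_I]
      push_cast
      ring
    have hGr : ∀ θ : ℝ, G (r, θ) = r * ‖f (circleMap c r θ)‖ ^ 2 := by
      intro θ
      have hmem : Complex.polarCoord.symm (r, θ) ∈ ball (0:ℂ) R := by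
        rw [mem_ball, Complex.dist_eq, sub_zero, habs, abs_of_pos hr.1]
        exact hr.2
      show (r, θ).1 * F (Complex.polarCoord.symm (r, θ)) = r * ‖f (circleMap c r θ)‖ ^ 2
      rw [hF, Set.indicator_of_mem hmem]
      have : v (Complex.polarCoord.symm (r, θ)) = u (circleMap c r θ) := by
        rw [hv]
        simp only [hsymm θ]
      rw [this, hu]
    have hper : Function.Periodic (fun θ : ℝ => ‖f (circleMap c r θ)‖ ^ 2) (2 * π) :=
      (periodic_circleMap c r).comp fun z => ‖f z‖ ^ 2
    have e1 : inner r = r * ∫ θ in (0:ℝ)..(2*π), ‖f (circleMap c r θ)‖ ^ 2 := by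
      rw [hinner_def]
      simp only [hGr]
      rw [MeasureTheory.integral_const_mul]
      congr 1
      rw [← MeasureTheory.integral_Ioc_eq_integral_Ioo,
        ← intervalIntegral.integral_of_le (by linarith [Real.pi_pos] : -π ≤ π)]
      have h2 := hper.intervalIntegral_add_eq (-π) 0
      rw [zero_add] at h2
      rw [show (-π) + 2 * π = π by ring] at h2
      exact h2
    have hdr : DifferentiableOn ℂ f (closedBall c r) :=
      hd.mono (closedBall_subset_closedBall hr.2.le)
    have hd2 : DifferentiableOn ℂ (fun z => f z * f z) (closedBall c r) := hdr.mul hdr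
    have hmv := circleMV hr.1 hd2
    have e2 : ‖f c * f c‖ = ‖f c‖ ^ 2 := by rw [norm_mul, sq]
    have e3 : (∫ θ in (0:ℝ)..(2*π), ‖f (circleMap c r θ) * f (circleMap c r θ)‖)
        = ∫ θ in (0:ℝ)..(2*π), ‖f (circleMap c r θ)‖ ^ 2 := by
      congr 1
      ext θ
      rw [norm_mul, sq]
    rw [e2, e3] at hmv
    rw [e1]
    calc 2 * π * ‖f c‖ ^ 2 * r = r * (2 * π * ‖f c‖ ^ 2) := by ring
      _ ≤ r * ∫ θ in (0:ℝ)..(2*π), ‖f (circleMap c r θ)‖ ^ 2 :=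
          mul_le_mul_of_nonneg_left hmv hr.1.le
  -- Step F : integrate the lower bound
  have hf1 : ∫ r in Set.Ioo (0:ℝ) R, 2 * π * ‖f c‖ ^ 2 * r = π * R ^ 2 * ‖f c‖ ^ 2 := by
    rw [MeasureTheory.integral_const_mul, ← MeasureTheory.integral_Ioc_eq_integral_Ioo,
      ← intervalIntegral.integral_of_le hR.le, integral_id]
    ring
  have hf2 : ∫ r in Set.Ioo (0:ℝ) R, 2 * π * ‖f c‖ ^ 2 * r ≤ ∫ r in Set.Ioo (0:ℝ) R, inner r := by
    refine setIntegral_mono_on ?_ (hinner_int.mono_set Set.Ioo_subset_Ioi_self)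
      measurableSet_Ioo hstepE
    exact (((continuous_const.mul continuous_id).integrableOn_Icc (a := (0:ℝ)) (b := R))).mono_set
      Set.Ioo_subset_Icc_self
  have hf3 : ∫ r in Set.Ioo (0:ℝ) R, inner r ≤ ∫ r in Set.Ioi (0:ℝ), inner r := by
    refine setIntegral_mono_set hinner_int ?_ (HasSubset.Subset.eventuallyLE Set.Ioo_subset_Ioi_self)
    exact (ae_restrict_iff' measurableSet_Ioi).2 (Filter.Eventually.of_forall hinner_nonneg)
  calc π * R ^ 2 * ‖f c‖ ^ 2 = ∫ r in Set.Ioo (0:ℝ) R, 2 * π * ‖f c‖ ^ 2 * r := hf1.symm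
    _ ≤ ∫ r in Set.Ioo (0:ℝ) R, inner r := hf2
    _ ≤ ∫ r in Set.Ioi (0:ℝ), inner r := hf3
    _ = ∫ p in Set.Ioi (0:ℝ) ×ˢ Set.Ioo (-π) π, G p := stepD.symm
    _ = ∫ p, F p := stepB
    _ = ∫ w in ball c R, u w := stepA

/-- A holomorphic function on the punctured disc with finite weighted `L²` norm extends
holomorphically over `0`, vanishing there (only positive Laurent terms). -/
theorem stmt5 (k : ℕ) (hk : 2 ≤ k) (f : ℂ → ℂ)
    (hf : DifferentiableOn ℂ f (Metric.ball (0 : ℂ) 1 \ {0}))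
    (hint : MeasureTheory.IntegrableOn
      (fun z : ℂ =>
        (-Real.log (‖z‖ ^ 2)) ^ (k - 2) * ‖f z‖ ^ 2 / ‖z‖ ^ 2)
      (Metric.ball (0 : ℂ) 1 \ {0})) :
    ∃ g : ℂ → ℂ, DifferentiableOn ℂ g (Metric.ball (0 : ℂ) 1) ∧ g 0 = 0 ∧
      ∀ z ∈ Metric.ball (0 : ℂ) 1 \ {0}, g z = f z := by
  classical
  set ρ : ℝ := Real.exp (-1) with hρdef
  have hρ0 : 0 < ρ := Real.exp_pos _
  have hρ1 : ρ < 1 := by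
    rw [hρdef]
    calc Real.exp (-1) < Real.exp 0 := Real.exp_lt_exp.2 (by norm_num)
      _ = 1 := Real.exp_zero
  set S : Set ℂ := ball (0:ℂ) ρ \ {0} with hSdef
  have hSopen : IsOpen S := isOpen_ball.sdiff isClosed_singleton
  have hSsub : S ⊆ ball (0:ℂ) 1 \ {0} := diff_subset_diff_left (ball_subset_ball hρ1.le)
  set h : ℂ → ℝ := fun z => ‖f z‖ ^ 2 / ‖z‖ ^ 2 with hhdef
  have h_nonneg : ∀ z, 0 ≤ h z := fun z => by positivity
  have hmemS : ∀ z ∈ S, z ≠ 0 ∧ ‖z‖ < ρ := by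
    intro z hz
    refine ⟨fun h0 => hz.2 (by simp [h0]), ?_⟩
    have := hz.1
    rwa [mem_ball, Complex.dist_eq, sub_zero] at this
  have hcontS : ContinuousOn h S := by
    apply ContinuousOn.div
    · exact (continuous_norm.comp_continuousOn (hf.continuousOn.mono hSsub)).pow 2
    · exact (continuous_norm.pow 2).continuousOn
    · intro z hz
      exact pow_ne_zero 2 (norm_ne_zero_iff.2 (hmemS z hz).1)
  have hIntS : IntegrableOn h S := by
    refine (hint.mono_set hSsub).mono'
      (hcontS.aestronglyMeasurable hSopen.measurableSet) ?_
    refine (ae_restrict_iff' hSopen.measurableSet).2 (Filter.Eventually.of_forall ?_)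
    intro z hz
    obtain ⟨hz0, hzρ⟩ := hmemS z hz
    have haz : 0 < ‖z‖ := norm_pos_iff.mpr hz0
    have hlog : (1:ℝ) ≤ -Real.log (‖z‖ ^ 2) := by
      have h1 : Real.log (‖z‖ ^ 2) = 2 * Real.log (‖z‖) := by
        rw [Real.log_pow]; push_cast; ring
      have h2 : Real.log (‖z‖) < -1 := by
        calc Real.log (‖z‖) < Real.log ρ := Real.log_lt_log haz hzρ
          _ = -1 := by rw [hρdef, Real.log_exp]
      rw [h1]; linarith
    have hw : (1:ℝ) ≤ (-Real.log (‖z‖ ^ 2)) ^ (k - 2) := one_le_pow₀ hlog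
    rw [Real.norm_of_nonneg (h_nonneg z), hhdef]
    calc ‖f z‖ ^ 2 / ‖z‖ ^ 2
        = 1 * ‖f z‖ ^ 2 / ‖z‖ ^ 2 := by ring
      _ ≤ (-Real.log (‖z‖ ^ 2)) ^ (k - 2) * ‖f z‖ ^ 2
            / ‖z‖ ^ 2 := by
          gcongr
  -- the shrinking-ball integral
  set eps : ℂ → ℝ :=
    fun c => ∫ x in ball (0:ℂ) (3 * ‖c‖ / 2), h x ∂(volume.restrict S) with hepsdef
  have key : ∀ c : ℂ, c ≠ 0 → ‖c‖ ≤ ρ / 2 → ‖f c‖ ^ 2 ≤ 9 / π * eps c := by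
    intro c hc0 hcρ
    have hac : 0 < ‖c‖ := norm_pos_iff.mpr hc0
    set R : ℝ := ‖c‖ / 2 with hRdef
    have hRpos : 0 < R := by positivity
    have hsub1 : closedBall c R ⊆ S := by
      intro w hw
      rw [mem_closedBall, Complex.dist_eq] at hw
      have hwlow : ‖c‖ - R ≤ ‖w‖ := by
        have h1 : ‖c‖ ≤ ‖w‖ + ‖w - c‖ := by
          calc ‖c‖ = ‖w + (c - w)‖ := by ring_nf
            _ ≤ ‖w‖ + ‖c - w‖ := norm_add_le _ _
            _ = ‖w‖ + ‖w - c‖ := by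
                rw [← norm_neg (c - w), neg_sub]
        linarith
      have hwup : ‖w‖ ≤ ‖c‖ + R := by
        calc ‖w‖ = ‖c + (w - c)‖ := by ring_nf
          _ ≤ ‖c‖ + ‖w - c‖ := norm_add_le _ _
          _ ≤ ‖c‖ + R := by linarith
      constructor
      · rw [mem_ball, Complex.dist_eq, sub_zero]
        calc ‖w‖ ≤ ‖c‖ + R := hwup
          _ = 3 * ‖c‖ / 2 := by rw [hRdef]; ring
          _ ≤ 3 * (ρ / 2) / 2 := by linarith
          _ < ρ := by linarith
      · intro hw0
        rw [Set.mem_singleton_iff] at hw0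
        rw [hw0, norm_zero] at hwlow
        have : ‖c‖ - R = R := by rw [hRdef]; ring
        linarith
    have hdc : DifferentiableOn ℂ f (closedBall c R) := hf.mono (hsub1.trans hSsub)
    have harea := areaMV hRpos hdc
    have hball_sub : ball c R ⊆ S := ball_subset_closedBall.trans hsub1
    have hIb : IntegrableOn h (ball c R) := hIntS.mono_set hball_sub
    have hIu : IntegrableOn (fun w => ‖f w‖ ^ 2) (ball c R) :=
      ((hdc.continuousOn.norm.pow 2).integrableOn_compact
        (isCompact_closedBall c R)).mono_set ball_subset_closedBall
    have hcomp : ∫ w in ball c R, ‖f w‖ ^ 2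
        ≤ 9 * ‖c‖ ^ 2 / 4 * ∫ w in ball c R, h w := by
      rw [← MeasureTheory.integral_const_mul]
      refine setIntegral_mono_on hIu (hIb.const_mul _) measurableSet_ball ?_
      intro w hw
      have hw' : ‖w‖ ≤ 3 * ‖c‖ / 2 := by
        have := hsub1 (ball_subset_closedBall hw)
        have h2 := ball_subset_closedBall hw
        rw [mem_closedBall, Complex.dist_eq] at h2
        calc ‖w‖ = ‖c + (w - c)‖ := by ring_nf
          _ ≤ ‖c‖ + ‖w - c‖ := norm_add_le _ _
          _ ≤ ‖c‖ + R := by linarith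
          _ = 3 * ‖c‖ / 2 := by rw [hRdef]; ring
      have hw0 : w ≠ 0 := (hball_sub hw).2 ∘ Set.mem_singleton_iff.2
      have haw : 0 < ‖w‖ := norm_pos_iff.mpr hw0
      have e : ‖f w‖ ^ 2 = h w * ‖w‖ ^ 2 := by
        rw [hhdef]
        field_simp
      rw [e]
      calc h w * ‖w‖ ^ 2 ≤ h w * (3 * ‖c‖ / 2) ^ 2 := by
            have := h_nonneg w
            gcongr
        _ = 9 * ‖c‖ ^ 2 / 4 * h w := by ring
    have hmono : ∫ w in ball c R, h w ≤ eps c := by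
      have e : ∫ w in ball c R, h w = ∫ w in ball c R, h w ∂(volume.restrict S) := by
        rw [Measure.restrict_restrict measurableSet_ball,
          Set.inter_eq_left.2 hball_sub]
      rw [e, hepsdef]
      refine setIntegral_mono_set hIntS.integrableOn ?_ ?_
      · exact (ae_restrict_iff' measurableSet_ball).2
          (Filter.Eventually.of_forall (fun x _ => h_nonneg x))
      · refine HasSubset.Subset.eventuallyLE ?_
        intro w hw
        rw [mem_ball, Complex.dist_eq] at hw
        rw [mem_ball, Complex.dist_eq, sub_zero]
        calc ‖w‖ = ‖c + (w - c)‖ := by ring_nf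
          _ ≤ ‖c‖ + ‖w - c‖ := norm_add_le _ _
          _ < ‖c‖ + R := by linarith
          _ = 3 * ‖c‖ / 2 := by rw [hRdef]; ring
    have hπ : (0:ℝ) < π := Real.pi_pos
    have hfinal : π * R ^ 2 * ‖f c‖ ^ 2 ≤ 9 * ‖c‖ ^ 2 / 4 * eps c := by
      calc π * R ^ 2 * ‖f c‖ ^ 2 ≤ ∫ w in ball c R, ‖f w‖ ^ 2 := harea
        _ ≤ 9 * ‖c‖ ^ 2 / 4 * ∫ w in ball c R, h w := hcomp
        _ ≤ 9 * ‖c‖ ^ 2 / 4 * eps c := by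
            have : (0:ℝ) ≤ 9 * ‖c‖ ^ 2 / 4 := by positivity
            gcongr
    have hR2 : R ^ 2 = ‖c‖ ^ 2 / 4 := by rw [hRdef]; ring
    rw [hR2] at hfinal
    have ha2 : 0 < ‖c‖ ^ 2 := pow_pos hac 2
    rw [div_mul_eq_mul_div, le_div_iff₀ hπ]
    nlinarith [hfinal, ha2]
  -- eps tends to zero
  have htend0 : Filter.Tendsto eps (nhdsWithin (0:ℂ) {0}ᶜ) (nhds 0) := by
    rw [hepsdef]
    apply Integrable.tendsto_setIntegral_nhds_zero hIntS
    have hb : ∀ c : ℂ, (volume.restrict S) (ball (0:ℂ) (3 * ‖c‖ / 2))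
        ≤ ENNReal.ofReal ((3 * ‖c‖ / 2) ^ 2 * π) := by
      intro c
      calc (volume.restrict S) (ball (0:ℂ) (3 * ‖c‖ / 2))
          ≤ volume (ball (0:ℂ) (3 * ‖c‖ / 2)) := Measure.restrict_apply_le _ _
        _ = ENNReal.ofReal (3 * ‖c‖ / 2) ^ 2 * NNReal.pi := Complex.volume_ball _ _
        _ = ENNReal.ofReal ((3 * ‖c‖ / 2) ^ 2 * π) := by
            rw [ENNReal.ofReal_mul (by positivity), ← ENNReal.ofReal_pow (by positivity)]
            congr 1
            rw [← ENNReal.ofReal_coe_nnreal, NNReal.coe_real_pi]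
    have habs : Filter.Tendsto (fun c : ℂ => (3 * ‖c‖ / 2) ^ 2 * π)
        (nhdsWithin (0:ℂ) {0}ᶜ) (nhds 0) := by
      have h1 : Filter.Tendsto (fun c : ℂ => ‖c‖) (nhdsWithin (0:ℂ) {0}ᶜ) (nhds 0) := by
        have h0 : Filter.Tendsto (fun c : ℂ => ‖c‖) (nhds 0) (nhds 0) := by
          simpa using continuous_norm.tendsto (0:ℂ)
        exact h0.mono_left nhdsWithin_le_nhds
      have h2 := ((h1.const_mul (3:ℝ)).div_const (2:ℝ)).pow 2
      have h3 := h2.mul_const π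
      simpa using h3
    have hofReal : Filter.Tendsto (fun c : ℂ => ENNReal.ofReal ((3 * ‖c‖ / 2) ^ 2 * π))
        (nhdsWithin (0:ℂ) {0}ᶜ) (nhds 0) := by
      have := (ENNReal.continuous_ofReal.tendsto 0).comp habs
      simpa [Function.comp_def] using this
    exact tendsto_of_tendsto_of_tendsto_of_le_of_le tendsto_const_nhds hofReal
      (fun c => zero_le) hb
  -- f tends to zero
  have hsq : Filter.Tendsto (fun c => ‖f c‖ ^ 2) (nhdsWithin (0:ℂ) {0}ᶜ) (nhds 0) := by
    have hev : ∀ᶠ c in nhdsWithin (0:ℂ) {0}ᶜ, ‖f c‖ ^ 2 ≤ 9 / π * eps c := by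
      have h1 : ∀ᶠ c in nhdsWithin (0:ℂ) {0}ᶜ, ‖c‖ ≤ ρ / 2 := by
        apply Filter.Eventually.filter_mono nhdsWithin_le_nhds
        have : Metric.closedBall (0:ℂ) (ρ/2) ∈ nhds (0:ℂ) :=
          Metric.closedBall_mem_nhds _ (by positivity)
        filter_upwards [this] with c hc
        rwa [mem_closedBall, Complex.dist_eq, sub_zero] at hc
      have h2 : ∀ᶠ c in nhdsWithin (0:ℂ) {0}ᶜ, c ≠ 0 := by
        have : {0}ᶜ ∈ nhdsWithin (0:ℂ) {0}ᶜ := self_mem_nhdsWithin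
        filter_upwards [this] with c hc using hc
      filter_upwards [h1, h2] with c hc1 hc2 using key c hc2 hc1
    have hlim : Filter.Tendsto (fun c => 9 / π * eps c) (nhdsWithin (0:ℂ) {0}ᶜ) (nhds 0) := by
      have := htend0.const_mul (9 / π)
      simpa using this
    exact squeeze_zero' (Filter.Eventually.of_forall (fun c => by positivity)) hev hlim
  have htf : Filter.Tendsto f (nhdsWithin (0:ℂ) {0}ᶜ) (nhds 0) := by
    rw [tendsto_zero_iff_norm_tendsto_zero]
    have h1 := (Real.continuous_sqrt.tendsto 0).comp hsq
    have h2 : (fun c => Real.sqrt (‖f c‖ ^ 2)) = fun c => ‖f c‖ :=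
      funext fun c => Real.sqrt_sq (norm_nonneg _)
    rw [Function.comp_def, h2] at h1
    simpa using h1
  -- removable singularity
  have hball : Metric.ball (0:ℂ) 1 ∈ nhds (0:ℂ) := ball_mem_nhds _ one_pos
  have ho : (fun z => f z - f 0) =o[nhdsWithin (0:ℂ) {0}ᶜ] fun z : ℂ => (z - 0)⁻¹ := by
    have hbig : (fun z => f z - f 0) =O[nhdsWithin (0:ℂ) {0}ᶜ] (fun _ : ℂ => (1:ℂ)) :=
      (htf.sub_const (f 0)).isBigO_one ℂ
    refine hbig.trans_isLittleO ?_
    rw [Asymptotics.isLittleO_iff]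
    intro ε hε
    have hsmall : ∀ᶠ z in nhdsWithin (0:ℂ) {0}ᶜ, ‖z‖ ≤ ε ∧ z ≠ 0 := by
      have h2 : ∀ᶠ z in nhdsWithin (0:ℂ) {0}ᶜ, ‖z‖ ≤ ε := by
        apply Filter.Eventually.filter_mono nhdsWithin_le_nhds
        have : Metric.closedBall (0:ℂ) ε ∈ nhds (0:ℂ) := Metric.closedBall_mem_nhds _ hε
        filter_upwards [this] with z hz
        rwa [mem_closedBall, Complex.dist_eq, sub_zero] at hz
      have h3 : ∀ᶠ z in nhdsWithin (0:ℂ) {0}ᶜ, z ≠ 0 := by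
        have : {0}ᶜ ∈ nhdsWithin (0:ℂ) {0}ᶜ := self_mem_nhdsWithin
        filter_upwards [this] with z hz using hz
      exact h2.and h3
    filter_upwards [hsmall] with z hz
    have haz : 0 < ‖z‖ := norm_pos_iff.mpr hz.2
    have e2 : ‖(z - 0)⁻¹‖ = (‖z‖)⁻¹ := by
      rw [sub_zero, norm_inv]
    calc ‖(fun _ : ℂ => (1:ℂ)) z‖ = 1 := norm_one
      _ = ‖z‖ * (‖z‖)⁻¹ := (mul_inv_cancel₀ haz.ne').symm
      _ ≤ ε * (‖z‖)⁻¹ := by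
          gcongr
          exact hz.1
      _ = ε * ‖(z - 0)⁻¹‖ := by rw [e2]
  have hlim : Filter.limUnder (nhdsWithin (0:ℂ) {0}ᶜ) f = 0 := htf.limUnder_eq
  refine ⟨Function.update f 0 0, ?_, ?_, ?_⟩
  · have := Complex.differentiableOn_update_limUnder_of_isLittleO hball hf ho
    rwa [hlim] at this
  · simp
  · intro z hz
    exact Function.update_of_ne (fun h0 => hz.2 (Set.mem_singleton_iff.2 h0)) _ _
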